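/- arXiv:2503.05538 — 4 statements merged into one kernel-verified Lean document; each statement's English description precedes it below -/
import Mathlib

section
/- Let X ∈ ℝ^{n×p} have full column rank, P symmetric positive semi-definite, λ > 0, ν ∈ (0,1], and β^PLS := (XᵀX + λP)⁻¹Xᵀy. The penalized boosting iterates β^[k] = [∑_{m=0}^{k-1} ν(I - ν(XᵀX+λP)⁻¹XᵀX)^m]·β^PLS converge to the unpenalized solution (XᵀX)⁻¹Xᵀy as k → ∞. -/
set_option maxHeartbeats 1000000


open Matrix Filter

theorem stmt_5 {n p : ℕ} (X : Matrix (Fin n) (Fin p) ℝ) (y : Fin n → ℝ)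
    (P : Matrix (Fin p) (Fin p) ℝ) (hP : P.PosSemidef)
    (lam ν : ℝ) (hlam : 0 < lam) (hν : ν ∈ Set.Ioc (0:ℝ) 1)
    (hrank : X.rank = p)
    (βPLS : Fin p → ℝ) (hPLS : βPLS = (Xᵀ * X + lam • P)⁻¹ *ᵥ (Xᵀ *ᵥ y)) :
    Tendsto
      (fun k : ℕ =>
        (∑ m ∈ Finset.range k,
            ν • (1 - ν • ((Xᵀ * X + lam • P)⁻¹ * (Xᵀ * X))) ^ m) *ᵥ βPLS)
      atTop (nhds ((Xᵀ * X)⁻¹ *ᵥ (Xᵀ *ᵥ y))) := by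
  obtain ⟨hν0, hν1⟩ := hν
  set M : Matrix (Fin p) (Fin p) ℝ := Xᵀ * X with hMdef
  set A : Matrix (Fin p) (Fin p) ℝ := M + lam • P with hAdef
  -- X has trivial kernel
  have hXker : ∀ x : Fin p → ℝ, X *ᵥ x = 0 → x = 0 := by
    intro x hx
    have h2 := X.mulVecLin.finrank_range_add_finrank_ker
    have h3 : Module.finrank ℝ (LinearMap.range X.mulVecLin) = p := hrank
    rw [h3, Module.finrank_pi ℝ, Fintype.card_fin] at h2
    have h4 : Module.finrank ℝ (LinearMap.ker X.mulVecLin) = 0 := by omega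
    have h5 : LinearMap.ker X.mulVecLin = ⊥ := Submodule.finrank_eq_zero.1 h4
    have h6 : x ∈ LinearMap.ker X.mulVecLin := by
      simpa [Matrix.mulVecLin_apply] using hx
    simpa [h5] using h6
  -- M = XᵀX is positive definite
  have hM : M.PosDef := by
    refine Matrix.PosDef.of_dotProduct_mulVec_pos (by simpa using Matrix.isHermitian_conjTranspose_mul_self X) fun x hx => ?_
    have h1 : star x ⬝ᵥ (M *ᵥ x) = (X *ᵥ x) ⬝ᵥ (X *ᵥ x) := by
      rw [star_trivial, hMdef, ← Matrix.mulVec_mulVec, Matrix.dotProduct_mulVec,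
        Matrix.vecMul_transpose]
    rw [h1]
    have hXx : X *ᵥ x ≠ 0 := fun h => hx (hXker x h)
    have := Matrix.dotProduct_star_self_pos_iff (v := X *ᵥ x) |>.2 hXx
    simpa using this
  have hlamP : (lam • P).PosSemidef := by
    refine Matrix.PosSemidef.of_dotProduct_mulVec_nonneg (show (lam • P)ᴴ = lam • P by
      rw [Matrix.conjTranspose_smul, hP.1.eq, star_trivial]) fun x => ?_
    rw [Matrix.smul_mulVec, dotProduct_smul, smul_eq_mul]
    exact mul_nonneg hlam.le (hP.dotProduct_mulVec_nonneg x)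
  have hA : A.PosDef := hM.add_posSemidef hlamP
  letI := hA.isUnit.invertible
  letI := hM.isUnit.invertible
  -- square root of M
  set R : Matrix (Fin p) (Fin p) ℝ := (open scoped MatrixOrder in CFC.sqrt M) with hRdef
  have hRsd : R.PosSemidef := open scoped MatrixOrder in Matrix.nonneg_iff_posSemidef.mp (CFC.sqrt_nonneg M)
  have hRR : R * R = M := open scoped MatrixOrder in CFC.sqrt_mul_sqrt_self M hM.posSemidef.nonneg
  have hRPD : R.PosDef := by
    refine Matrix.PosDef.of_dotProduct_mulVec_pos hRsd.1 fun x hx => ?_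
    rcases (hRsd.dotProduct_mulVec_nonneg x).lt_or_eq with h | h
    · exact h
    · exfalso
      have h1 : R *ᵥ x = 0 := (hRsd.dotProduct_mulVec_zero_iff x).1 h.symm
      have h2 : M *ᵥ x = 0 := by
        rw [← hRR, ← Matrix.mulVec_mulVec, h1, Matrix.mulVec_zero]
      have := hM.dotProduct_mulVec_pos hx
      rw [h2, dotProduct_zero] at this
      exact lt_irrefl _ this
  letI := hRPD.isUnit.invertible
  have hRH : Rᵀ = R := by
    have := hRsd.1
    rwa [Matrix.IsHermitian, Matrix.conjTranspose_eq_transpose_of_trivial] at this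
  -- T = R A⁻¹ R
  set T : Matrix (Fin p) (Fin p) ℝ := R * A⁻¹ * R with hTdef
  have hTH : T.IsHermitian := by
    have := Matrix.isHermitian_conjTranspose_mul_mul R hA.isHermitian.inv
    rwa [hRsd.1] at this
  have hTPD : T.PosDef := by
    refine Matrix.PosDef.of_dotProduct_mulVec_pos hTH fun x hx => ?_
    have hRx : R *ᵥ x ≠ 0 := by
      intro h
      exact hx (Matrix.mulVec_injective_of_invertible R (h.trans (Matrix.mulVec_zero R).symm))
    have h1 : star x ⬝ᵥ (T *ᵥ x) = star (R *ᵥ x) ⬝ᵥ (A⁻¹ *ᵥ (R *ᵥ x)) := by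
      rw [star_trivial, star_trivial, hTdef, ← Matrix.mulVec_mulVec, ← Matrix.mulVec_mulVec,
        Matrix.dotProduct_mulVec x R, ← Matrix.mulVec_transpose, hRH]
    rw [h1]
    exact hA.inv.dotProduct_mulVec_pos hRx
  letI := hTPD.isUnit.invertible
  -- B and H
  set B : Matrix (Fin p) (Fin p) ℝ := 1 - ν • (A⁻¹ * M) with hBdef
  set H : Matrix (Fin p) (Fin p) ℝ := 1 - ν • T with hHdef
  have hHH : H.IsHermitian := by
    show Hᴴ = H
    rw [hHdef, Matrix.conjTranspose_sub, Matrix.conjTranspose_one, Matrix.conjTranspose_smul,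
      star_trivial, hTH.eq]
  -- intertwining
  have hRB : R * B = H * R := by
    rw [hBdef, hHdef, Matrix.mul_sub, Matrix.sub_mul, Matrix.mul_one, Matrix.one_mul,
      Matrix.mul_smul, Matrix.smul_mul]
    congr 1
    rw [hTdef, Matrix.mul_assoc, Matrix.mul_assoc, hRR]
  have hRBk : ∀ k : ℕ, R * B ^ k = H ^ k * R := by
    intro k
    induction k with
    | zero => simp
    | succ k ih =>
      rw [pow_succ, pow_succ, ← Matrix.mul_assoc, ih, Matrix.mul_assoc, hRB,
        ← Matrix.mul_assoc]
  -- eigenvalues of H are in [0,1)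
  set c : Fin p → ℝ := hHH.eigenvalues with hcdef
  have key : ∀ i, 0 ≤ c i ∧ c i < 1 := by
    intro i
    set v : Fin p → ℝ := ⇑(hHH.eigenvectorBasis i) with hvdef
    have hv0 : v ≠ 0 := by
      intro h
      exact hHH.eigenvectorBasis.orthonormal.ne_zero i (by ext j; exact congrFun h j)
    have hs : 0 < v ⬝ᵥ v := by
      have := Matrix.dotProduct_star_self_pos_iff (v := v) |>.2 hv0
      simpa using this
    have hHv : H *ᵥ v = c i • v := hHH.mulVec_eigenvectorBasis i
    set μ : ℝ := ν⁻¹ * (1 - c i) with hμdef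
    have hTv : T *ᵥ v = μ • v := by
      have h1 : H *ᵥ v = v - ν • (T *ᵥ v) := by
        rw [hHdef, Matrix.sub_mulVec, Matrix.one_mulVec, Matrix.smul_mulVec]
      have h2 : ν • (T *ᵥ v) = (1 - c i) • v := by
        have h := h1.symm.trans hHv
        have h' : ν • (T *ᵥ v) = v - c i • v := by
          rw [← h, sub_sub_cancel]
        rw [h', sub_smul, one_smul]
      have h3 : T *ᵥ v = ν⁻¹ • ((1 - c i) • v) := by
        rw [← h2, smul_smul, inv_mul_cancel₀ hν0.ne', one_smul]
      rw [h3, smul_smul]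
    have hquad : v ⬝ᵥ (T *ᵥ v) = μ * (v ⬝ᵥ v) := by
      rw [hTv, dotProduct_smul, smul_eq_mul]
    have hμpos : 0 < μ := by
      have h1 := hTPD.dotProduct_mulVec_pos hv0
      rw [star_trivial, hquad] at h1
      nlinarith
    -- T⁻¹ = 1 + lam • (R⁻¹ * P * R⁻¹)
    have hTinv : T⁻¹ = 1 + lam • (R⁻¹ * P * R⁻¹) := by
      have h1 : (R⁻¹ * A * R⁻¹) * T = 1 := by
        rw [hTdef]
        simp only [Matrix.mul_assoc]
        rw [Matrix.inv_mul_cancel_left_of_invertible, Matrix.mul_inv_cancel_left_of_invertible,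
          Matrix.inv_mul_of_invertible]
      have h2 : T⁻¹ = R⁻¹ * A * R⁻¹ := Matrix.inv_eq_left_inv h1
      rw [h2, hAdef, Matrix.mul_add, Matrix.add_mul, ← hRR]
      congr 1
      · simp only [Matrix.mul_assoc]
        rw [Matrix.mul_inv_of_invertible, Matrix.mul_one, Matrix.inv_mul_of_invertible]
      · rw [Matrix.mul_smul, Matrix.smul_mul]
    have hRPRsd : (R⁻¹ * P * R⁻¹).PosSemidef := by
      have hRinvH : (R⁻¹)ᴴ = R⁻¹ := hRsd.1.inv
      have := hP.conjTranspose_mul_mul_same R⁻¹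
      rwa [hRinvH] at this
    have hTiv : T⁻¹ *ᵥ v = μ⁻¹ • v := by
      have h1 : T⁻¹ *ᵥ (T *ᵥ v) = v := by
        rw [Matrix.mulVec_mulVec, Matrix.nonsing_inv_mul _ (Matrix.isUnit_det_of_invertible T),
          Matrix.one_mulVec]
      rw [hTv, Matrix.mulVec_smul] at h1
      have h2 := congrArg (fun w => μ⁻¹ • w) h1
      simp only [smul_smul, inv_mul_cancel₀ hμpos.ne', one_smul] at h2
      exact h2
    have hμle : μ ≤ 1 := by
      have h1 : v ⬝ᵥ (T⁻¹ *ᵥ v) = μ⁻¹ * (v ⬝ᵥ v) := by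
        rw [hTiv, dotProduct_smul, smul_eq_mul]
      have h2 : v ⬝ᵥ (T⁻¹ *ᵥ v) = v ⬝ᵥ v + lam * (v ⬝ᵥ ((R⁻¹ * P * R⁻¹) *ᵥ v)) := by
        rw [hTinv, Matrix.add_mulVec, Matrix.one_mulVec, dotProduct_add,
          Matrix.smul_mulVec, dotProduct_smul, smul_eq_mul]
      have h3 : 0 ≤ v ⬝ᵥ ((R⁻¹ * P * R⁻¹) *ᵥ v) := by
        have := hRPRsd.dotProduct_mulVec_nonneg v
        simpa using this
      have h4 : μ⁻¹ * (v ⬝ᵥ v) ≥ v ⬝ᵥ v := by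
        rw [← h1, h2]
        nlinarith
      have h5 : 1 ≤ μ⁻¹ := by
        by_contra h
        push_neg at h
        nlinarith
      have h6 := mul_inv_cancel₀ hμpos.ne'
      nlinarith
    constructor
    · have : ν * μ ≤ 1 := by nlinarith
      have hceq : c i = 1 - ν * μ := by
        rw [hμdef]
        field_simp
        ring
      rw [hceq]; linarith
    · have : 0 < ν * μ := mul_pos hν0 hμpos
      have hceq : c i = 1 - ν * μ := by
        rw [hμdef]
        field_simp
        ring
      rw [hceq]; linarith
  -- spectral theorem and powers
  set U : Matrix (Fin p) (Fin p) ℝ := (Matrix.IsHermitian.eigenvectorUnitary hHH : Matrix (Fin p) (Fin p) ℝ) with hUdef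
  have hspec : H = U * Matrix.diagonal c * star U := by
    have := hHH.spectral_theorem
    simpa using this
  have hUU : star U * U = 1 := Unitary.coe_star_mul_self _
  have hUU' : U * star U = 1 := Unitary.coe_mul_star_self _
  have hpow : ∀ k : ℕ, H ^ k = U * Matrix.diagonal (fun i => c i ^ k) * star U := by
    intro k
    induction k with
    | zero =>
      simp only [pow_zero]
      rw [Matrix.diagonal_one, Matrix.mul_one, hUU']
    | succ k ih =>
      rw [pow_succ, ih, hspec]
      simp only [Matrix.mul_assoc]
      rw [← Matrix.mul_assoc (star U) U, hUU, Matrix.one_mul,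
        ← Matrix.mul_assoc (Matrix.diagonal fun i => c i ^ k) (Matrix.diagonal c),
        Matrix.diagonal_mul_diagonal]
      simp only [← pow_succ]
  -- H^k → 0
  have hdlim : Tendsto (fun k : ℕ => Matrix.diagonal (fun i => c i ^ k)) atTop
      (nhds (0 : Matrix (Fin p) (Fin p) ℝ)) := by
    refine tendsto_pi_nhds.2 fun i => tendsto_pi_nhds.2 fun j => ?_
    by_cases hij : i = j
    · subst hij
      simp only [Matrix.diagonal_apply_eq]
      have h0 : (0 : Matrix (Fin p) (Fin p) ℝ) i i = 0 := rfl
      rw [h0]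
      exact tendsto_pow_atTop_nhds_zero_of_lt_one (key i).1 (key i).2
    · simp only [Matrix.diagonal_apply_ne _ hij]
      have h0 : (0 : Matrix (Fin p) (Fin p) ℝ) i j = 0 := rfl
      rw [h0]
      exact tendsto_const_nhds
  have hHlim : Tendsto (fun k : ℕ => H ^ k) atTop (nhds 0) := by
    have hcont : Continuous (fun Z : Matrix (Fin p) (Fin p) ℝ => U * Z * star U) :=
      (continuous_const.matrix_mul continuous_id).matrix_mul continuous_const
    have h1 := (hcont.tendsto 0).comp hdlim
    simp only [Function.comp_def, Matrix.mul_zero, Matrix.zero_mul] at h1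
    refine h1.congr fun k => ?_
    rw [hpow k]
  have hBlim : Tendsto (fun k : ℕ => B ^ k) atTop (nhds 0) := by
    have hBk : ∀ k : ℕ, B ^ k = R⁻¹ * (H ^ k * R) := by
      intro k
      rw [← hRBk k, Matrix.inv_mul_cancel_left_of_invertible]
    have hcont : Continuous (fun Z : Matrix (Fin p) (Fin p) ℝ => R⁻¹ * (Z * R)) :=
      continuous_const.matrix_mul (continuous_id.matrix_mul continuous_const)
    have h1 := (hcont.tendsto 0).comp hHlim
    simp only [Function.comp_def, Matrix.mul_zero, Matrix.zero_mul] at h1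
    refine h1.congr fun k => (hBk k).symm
  -- geometric sum identity
  set G : Matrix (Fin p) (Fin p) ℝ := M⁻¹ * A with hGdef
  have hgeom : ∀ k : ℕ, (∑ m ∈ Finset.range k, ν • B ^ m) = G * (1 - B ^ k) := by
    intro k
    have h1 : (1 - B) * ∑ m ∈ Finset.range k, B ^ m = 1 - B ^ k := by
      calc (1 - B) * ∑ m ∈ Finset.range k, B ^ m
          = -((B - 1) * ∑ m ∈ Finset.range k, B ^ m) := by rw [← neg_mul, neg_sub]
        _ = -(B ^ k - 1) := by rw [mul_geom_sum]
        _ = 1 - B ^ k := neg_sub _ _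
    have h1B : (1 : Matrix (Fin p) (Fin p) ℝ) - B = ν • (A⁻¹ * M) := by
      rw [hBdef, sub_sub_cancel]
    have h2 : G * (1 - B) = ν • (1 : Matrix (Fin p) (Fin p) ℝ) := by
      rw [h1B, hGdef, Matrix.mul_smul]
      congr 1
      simp only [Matrix.mul_assoc]
      rw [Matrix.mul_inv_cancel_left_of_invertible, Matrix.inv_mul_of_invertible]
    calc (∑ m ∈ Finset.range k, ν • B ^ m)
        = ν • ∑ m ∈ Finset.range k, B ^ m := (Finset.smul_sum).symm
      _ = (ν • (1 : Matrix (Fin p) (Fin p) ℝ)) * ∑ m ∈ Finset.range k, B ^ m := by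
          rw [Matrix.smul_mul, Matrix.one_mul]
      _ = (G * (1 - B)) * ∑ m ∈ Finset.range k, B ^ m := by rw [h2]
      _ = G * ((1 - B) * ∑ m ∈ Finset.range k, B ^ m) := by rw [Matrix.mul_assoc]
      _ = G * (1 - B ^ k) := by rw [h1]
  have htarget : G *ᵥ βPLS = M⁻¹ *ᵥ (Xᵀ *ᵥ y) := by
    rw [hPLS, Matrix.mulVec_mulVec, hGdef, Matrix.mul_inv_cancel_right_of_invertible]
  have hmain : ∀ k : ℕ, (∑ m ∈ Finset.range k, ν • B ^ m) *ᵥ βPLS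
      = M⁻¹ *ᵥ (Xᵀ *ᵥ y) - G *ᵥ (B ^ k *ᵥ βPLS) := by
    intro k
    rw [hgeom k, Matrix.mul_sub, Matrix.mul_one, Matrix.sub_mulVec, htarget,
      ← Matrix.mulVec_mulVec]
  have hzero : Tendsto (fun k : ℕ => G *ᵥ (B ^ k *ᵥ βPLS)) atTop (nhds 0) := by
    have hcont : Continuous (fun Z : Matrix (Fin p) (Fin p) ℝ => G *ᵥ (Z *ᵥ βPLS)) :=
      continuous_const.matrix_mulVec (continuous_id.matrix_mulVec continuous_const)
    have h1 := (hcont.tendsto 0).comp hBlim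
    simp only [Function.comp_def, Matrix.zero_mulVec, Matrix.mulVec_zero] at h1
    exact h1
  have hfinal := tendsto_const_nhds (α := ℕ) (x := M⁻¹ *ᵥ (Xᵀ *ᵥ y)) |>.sub hzero
  rw [sub_zero] at hfinal
  refine hfinal.congr fun k => (hmain k).symm
end

section
/- Suppose XᵀX = σ²I for some σ² > 0. Then the L2-boosting iterate β^[k] = (1-(1-ν)^k)(XᵀX)⁻¹Xᵀy equals the ridge regression solution (XᵀX + λ̃(k)I)⁻¹Xᵀy with penalty λ̃(k) = σ²(1-ν)^k/(1-(1-ν)^k), for every k ≥ 1 and ν ∈ (0,1). -/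
open Matrix

lemma smul_one_inv' {p : ℕ} (c : ℝ) (hc : c ≠ 0) :
    (c • (1 : Matrix (Fin p) (Fin p) ℝ))⁻¹ = c⁻¹ • 1 := by
  apply Matrix.inv_eq_right_inv
  rw [Matrix.smul_mul, Matrix.mul_smul, smul_smul, one_mul, mul_inv_cancel₀ hc, one_smul]

theorem stmt_8 {n p : ℕ} (X : Matrix (Fin n) (Fin p) ℝ) (y : Fin n → ℝ)
    (σsq : ℝ) (hσ : 0 < σsq) (hiso : Xᵀ * X = σsq • (1 : Matrix (Fin p) (Fin p) ℝ))
    (ν : ℝ) (hν : ν ∈ Set.Ioo (0:ℝ) 1) :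
    ∀ k : ℕ, 1 ≤ k →
      (1 - (1 - ν) ^ k) • ((Xᵀ * X)⁻¹ *ᵥ (Xᵀ *ᵥ y)) =
        (Xᵀ * X + (σsq * (1 - ν) ^ k / (1 - (1 - ν) ^ k)) •
            (1 : Matrix (Fin p) (Fin p) ℝ))⁻¹ *ᵥ (Xᵀ *ᵥ y) := by
  intro k hk
  obtain ⟨hν0, hν1⟩ := hν
  have ht0 : 0 < (1 - ν) ^ k := pow_pos (by linarith) k
  have ht1 : (1 - ν) ^ k < 1 := pow_lt_one₀ (by linarith) (by linarith) (by omega)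
  set t := (1 - ν) ^ k
  have h1t : (0:ℝ) < 1 - t := by linarith
  have hsum : σsq + σsq * t / (1 - t) = σsq / (1 - t) := by
    field_simp; ring
  rw [hiso, smul_one_inv' σsq hσ.ne', ← add_smul, smul_one_inv' _ (by positivity),
    Matrix.smul_mulVec, Matrix.smul_mulVec, smul_smul, hsum]
  congr 1
  field_simp
end

section
/- If for every k ≥ 1 the L2-boosting iterate β^[k] = (1-(1-ν)^k)(XᵀX)⁻¹Xᵀy coincides with a ridge regression solution (XᵀX + λ̃I)⁻¹Xᵀy for some λ̃ > 0 (depending on k) and arbitrary response y, then XᵀX = σ²I for some σ² > 0. -/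
open Matrix

theorem stmt_9 {n p : ℕ} (X : Matrix (Fin n) (Fin p) ℝ)
    (hrank : X.rank = p) (ν : ℝ) (hν : ν ∈ Set.Ioo (0:ℝ) 1)
    (hmatch : ∀ k : ℕ, 1 ≤ k → ∃ lam : ℝ, 0 < lam ∧
      ∀ y : Fin n → ℝ,
        (1 - (1 - ν) ^ k) • ((Xᵀ * X)⁻¹ *ᵥ (Xᵀ *ᵥ y)) =
          (Xᵀ * X + lam • (1 : Matrix (Fin p) (Fin p) ℝ))⁻¹ *ᵥ (Xᵀ *ᵥ y)) :
    ∃ σsq : ℝ, 0 < σsq ∧ Xᵀ * X = σsq • (1 : Matrix (Fin p) (Fin p) ℝ) := by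
  obtain ⟨hν0, hν1⟩ := hν
  set A : Matrix (Fin p) (Fin p) ℝ := Xᵀ * X with hA
  -- A has full rank
  have hArank : A.rank = p := by
    rw [hA, Matrix.rank_transpose_mul_self, hrank]
  -- A.mulVec is surjective
  have hsurj : Function.Surjective A.mulVec := by
    have : LinearMap.range A.mulVecLin = ⊤ := by
      apply Submodule.eq_top_of_finrank_eq
      rw [← Matrix.rank, hArank, Module.finrank_pi]
      simp
    intro z
    obtain ⟨v, hv⟩ := (LinearMap.range_eq_top.mp this) z
    exact ⟨v, hv⟩
  have hAunit : IsUnit A := Matrix.mulVec_surjective_iff_isUnit.mp hsurj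
  have hAdet : IsUnit A.det := (Matrix.isUnit_iff_isUnit_det A).mp hAunit
  -- use k = 1
  obtain ⟨lam, hlam, heq⟩ := hmatch 1 le_rfl
  have hc : (1 : ℝ) - (1 - ν) ^ 1 = ν := by ring
  set B : Matrix (Fin p) (Fin p) ℝ := A + lam • 1 with hB
  -- For all z, ν • (A⁻¹ *ᵥ z) = B⁻¹ *ᵥ z
  have hz : ∀ z : Fin p → ℝ, ν • (A⁻¹ *ᵥ z) = B⁻¹ *ᵥ z := by
    intro z
    obtain ⟨v, hv⟩ := hsurj z
    have := heq (X *ᵥ v)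
    rw [hc] at this
    have hXv : Xᵀ *ᵥ (X *ᵥ v) = z := by rw [Matrix.mulVec_mulVec, ← hA, hv]
    rwa [hXv] at this
  -- hence matrices agree
  have hM : ν • A⁻¹ = B⁻¹ := by
    ext i j
    have := congrFun (hz (Pi.single j 1)) i
    simpa [Matrix.mulVec_single, Matrix.smul_mulVec] using this
  -- B is invertible
  have hBinvUnit : IsUnit B⁻¹ := by
    rw [← hM]
    rw [Matrix.isUnit_iff_isUnit_det, Matrix.det_smul]
    rw [Fintype.card_fin]
    exact (IsUnit.pow p (Ne.isUnit (ne_of_gt hν0))).mul (A.isUnit_nonsing_inv_det hAdet)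
  have hBdet : IsUnit B.det := (Matrix.isUnit_iff_isUnit_det B).mp
    (Matrix.isUnit_nonsing_inv_iff.mp hBinvUnit)
  -- B * (ν • A⁻¹) = 1
  have hkey : B * (ν • A⁻¹) = 1 := by
    rw [hM]; exact Matrix.mul_nonsing_inv B hBdet
  have hexp : ν • (1 : Matrix (Fin p) (Fin p) ℝ) + (ν * lam) • A⁻¹ = 1 := by
    have h1 : B * (ν • A⁻¹) = ν • (A * A⁻¹) + (ν * lam) • A⁻¹ := by
      rw [hB]
      rw [Matrix.add_mul, Matrix.mul_smul, Matrix.smul_mul, Matrix.one_mul,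
        smul_smul, mul_comm lam ν]
    rw [h1, Matrix.mul_nonsing_inv A hAdet] at hkey
    exact hkey
  -- multiply on the right by A
  have hexp2 : ν • A + (ν * lam) • (1 : Matrix (Fin p) (Fin p) ℝ) = A := by
    have := congrArg (fun M => M * A) hexp
    simpa [Matrix.add_mul, Matrix.smul_mul, Matrix.one_mul,
      Matrix.nonsing_inv_mul A hAdet] using this
  refine ⟨ν * lam / (1 - ν), div_pos (mul_pos hν0 hlam) (by linarith), ?_⟩
  have h1ν : (1 : ℝ) - ν ≠ 0 := by linarith
  have : (1 - ν) • A = (ν * lam) • (1 : Matrix (Fin p) (Fin p) ℝ) := by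
    calc (1 - ν) • A = A - ν • A := by rw [sub_smul, one_smul]
      _ = (ν * lam) • (1 : Matrix (Fin p) (Fin p) ℝ) := sub_eq_iff_eq_add'.mpr hexp2.symm
  calc A = (1 - ν)⁻¹ • ((1 - ν) • A) := by rw [smul_smul, inv_mul_cancel₀ h1ν, one_smul]
    _ = (ν * lam / (1 - ν)) • (1 : Matrix (Fin p) (Fin p) ℝ) := by
        rw [this, smul_smul]; ring_nf
end

section
/- The function g : ℝ → ℝ, g(ξ) = ξ + r²·exp(-2ξ)/2 for fixed r ≠ 0, is convex but not L-smooth: its second derivative 2r²exp(-2ξ) is unbounded as ξ → -∞, so no L > 0 satisfies |g'(ξ) - g'(ξ̃)| ≤ L|ξ - ξ̃| for all ξ, ξ̃. -/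
theorem stmt_19 (r : ℝ) (hr : r ≠ 0)
    (g : ℝ → ℝ) (hg : ∀ ξ, g ξ = ξ + r ^ 2 * Real.exp (-2 * ξ) / 2) :
    ConvexOn ℝ Set.univ g ∧
    (∀ ξ, deriv (deriv g) ξ = 2 * r ^ 2 * Real.exp (-2 * ξ)) ∧
    (¬ BddAbove (Set.range fun ξ => deriv (deriv g) ξ)) ∧
    ∀ L : ℝ, 0 < L → ¬ ∀ ξ ξ' : ℝ, |deriv g ξ - deriv g ξ'| ≤ L * |ξ - ξ'| := by
  have hgf : g = fun ξ => ξ + r ^ 2 * Real.exp (-2 * ξ) / 2 := funext hg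
  have he : ∀ ξ : ℝ, HasDerivAt (fun ξ : ℝ => Real.exp (-2 * ξ))
      (Real.exp (-2 * ξ) * (-2)) ξ := by
    intro ξ
    have := (Real.hasDerivAt_exp (-2 * ξ)).comp ξ ((hasDerivAt_id ξ).const_mul (-2))
    simpa [Function.comp_def, mul_comm] using this
  have h1 : ∀ ξ, HasDerivAt g (1 - r ^ 2 * Real.exp (-2 * ξ)) ξ := by
    intro ξ
    have h := (hasDerivAt_id ξ).add (((he ξ).const_mul (r ^ 2)).div_const 2)
    rw [hgf]
    convert h using 1
    · rfl
    · rfl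
    · rfl
    · ring
  have hd1 : deriv g = fun ξ => 1 - r ^ 2 * Real.exp (-2 * ξ) :=
    funext fun ξ => (h1 ξ).deriv
  have h2 : ∀ ξ, HasDerivAt (deriv g) (2 * r ^ 2 * Real.exp (-2 * ξ)) ξ := by
    intro ξ
    rw [hd1]
    have h := (hasDerivAt_const ξ (1 : ℝ)).sub ((he ξ).const_mul (r ^ 2))
    convert h using 1
    · rfl
    · rfl
    · rfl
    · ring
  have hd2 : ∀ ξ, deriv (deriv g) ξ = 2 * r ^ 2 * Real.exp (-2 * ξ) :=
    fun ξ => (h2 ξ).deriv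
  have hr2 : 0 < r ^ 2 := by positivity
  have key : ∀ c : ℝ, ∃ ξ : ℝ, c < Real.exp (-2 * ξ) := by
    intro c
    refine ⟨-(Real.log (|c| + 1)) / 2, ?_⟩
    have h0 : (0:ℝ) < |c| + 1 := by positivity
    have : -2 * (-(Real.log (|c| + 1)) / 2) = Real.log (|c| + 1) := by ring
    rw [this, Real.exp_log h0]
    have := le_abs_self c
    linarith
  refine ⟨?_, hd2, ?_, ?_⟩
  · apply convexOn_univ_of_deriv2_nonneg (fun ξ => (h1 ξ).differentiableAt)
      (fun ξ => (h2 ξ).differentiableAt)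
    intro x
    simp only [Function.iterate_succ, Function.iterate_zero, Function.comp_apply, id_eq]
    rw [hd2]
    positivity
  · intro ⟨M, hM⟩
    simp only [upperBounds, Set.mem_range, Set.mem_setOf_eq, forall_exists_index] at hM
    -- find ξ with 2 r² exp(-2ξ) > M
    obtain ⟨ξ, hξ⟩ : ∃ ξ : ℝ, M < 2 * r ^ 2 * Real.exp (-2 * ξ) := by
      obtain ⟨ξ, hξ⟩ := key (M / (2 * r ^ 2))
      refine ⟨ξ, ?_⟩
      have h2r : (0:ℝ) < 2 * r ^ 2 := by positivity
      calc M = M / (2 * r ^ 2) * (2 * r ^ 2) := by field_simp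
        _ < Real.exp (-2 * ξ) * (2 * r ^ 2) := by nlinarith
        _ = 2 * r ^ 2 * Real.exp (-2 * ξ) := by ring
    have := hM ξ rfl
    rw [hd2] at this
    linarith
  · intro L hL h
    -- pick ξ negative enough
    obtain ⟨ξ, hξ⟩ : ∃ ξ : ℝ, L < r ^ 2 * Real.exp (-2 * ξ) * (Real.exp 2 - 1) := by
      obtain ⟨ξ, hξ⟩ := key (L / r ^ 2)
      refine ⟨ξ, ?_⟩
      have hexp2 : (1:ℝ) < Real.exp 2 - 1 := by nlinarith [Real.add_one_le_exp (2:ℝ)]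
      have hep : (0:ℝ) < Real.exp (-2 * ξ) := Real.exp_pos _
      have : L < r ^ 2 * Real.exp (-2 * ξ) := by
        calc L = L / r ^ 2 * r ^ 2 := by field_simp
          _ < Real.exp (-2 * ξ) * r ^ 2 := by nlinarith
          _ = r ^ 2 * Real.exp (-2 * ξ) := by ring
      nlinarith
    have := h ξ (ξ - 1)
    rw [hd1] at this
    simp only at this
    have habs : |(1 - r ^ 2 * Real.exp (-2 * ξ)) - (1 - r ^ 2 * Real.exp (-2 * (ξ - 1)))|
        = r ^ 2 * Real.exp (-2 * ξ) * (Real.exp 2 - 1) := by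
      have : Real.exp (-2 * (ξ - 1)) = Real.exp (-2 * ξ) * Real.exp 2 := by
        rw [← Real.exp_add]; ring_nf
      rw [this, abs_of_nonneg (by nlinarith [Real.exp_pos (-2*ξ), Real.add_one_le_exp (2:ℝ)])]
      ring
    rw [habs] at this
    simp only [sub_sub_cancel, abs_one, mul_one] at this
    linarith
end
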